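/- Let k be an algebraically closed field. If there exists a nonconstant morphism ψ from P^{1}_k to V(d) − L(d), i.e. an N×N matrix Ψ = (ψ_{ij}) of polynomials over k in 2 variables satisfying conditions (I)–(III), then N ≥ 4. -/

import Mathlib

open MvPolynomial Polynomial

lemma aux_eval_smul {k : Type*} [CommSemiring k] {p : MvPolynomial (Fin 2) k} {D : ℕ}
    (hp : p.IsHomogeneous D) (s : k) (γ : Fin 2 → k) :
    MvPolynomial.eval (s • γ) p = s ^ D * MvPolynomial.eval γ p := by
  rw [MvPolynomial.eval_eq, MvPolynomial.eval_eq, Finset.mul_sum]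
  apply Finset.sum_congr rfl
  intro e he
  have hdeg : ∑ i ∈ e.support, e i = D := by
    have := hp (MvPolynomial.mem_support_iff.mp he)
    simpa [Finsupp.weight_apply, Finsupp.sum] using this
  simp_rw [Pi.smul_apply, smul_eq_mul, mul_pow, Finset.prod_mul_distrib,
    Finset.prod_pow_eq_pow_sum, hdeg]
  ring

lemma aux_exists_zero {k : Type*} [Field k] [IsAlgClosed k] (p : MvPolynomial (Fin 2) k)
    {D : ℕ} (hD : 0 < D) (hp : p.IsHomogeneous D) :
    ∃ γ : Fin 2 → k, γ ≠ 0 ∧ MvPolynomial.eval γ p = 0 := by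
  by_contra hcon
  push_neg at hcon
  have h10 : (![1, (0:k)] : Fin 2 → k) ≠ 0 := by
    intro h; simpa using congrFun h 0
  have h01 : (![0, (1:k)] : Fin 2 → k) ≠ 0 := by
    intro h; simpa using congrFun h 1
  have h1t : ∀ t : k, (![1, t] : Fin 2 → k) ≠ 0 := by
    intro t h; simpa using congrFun h 0
  set f : Polynomial k := MvPolynomial.eval₂ Polynomial.C ![1, Polynomial.X] p with hf
  have hfe : ∀ t : k, f.eval t = MvPolynomial.eval ![1, t] p := by
    intro t
    rw [hf, MvPolynomial.polynomial_eval_eval₂]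
    have hc : (Polynomial.evalRingHom t).comp Polynomial.C = RingHom.id k := by
      ext x; simp
    rw [hc, MvPolynomial.eval₂_id]
    have hv : (fun s => Polynomial.eval t (![1, Polynomial.X] s)) = ![(1:k), t] := by
      funext i; fin_cases i <;> simp
    rw [hv]
  set g : Polynomial k := MvPolynomial.eval₂ Polynomial.C ![Polynomial.X, 1] p with hg
  have hge : ∀ s : k, g.eval s = MvPolynomial.eval ![s, 1] p := by
    intro s
    rw [hg, MvPolynomial.polynomial_eval_eval₂]
    have hc : (Polynomial.evalRingHom s).comp Polynomial.C = RingHom.id k := by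
      ext x; simp
    rw [hc, MvPolynomial.eval₂_id]
    have hv : (fun i => Polynomial.eval s (![Polynomial.X, 1] i)) = ![s, (1:k)] := by
      funext i; fin_cases i <;> simp
    rw [hv]
  -- f has no roots, hence is constant
  have hfd : f.natDegree = 0 := by
    by_contra hfd
    have : f.degree ≠ 0 := by
      intro h
      exact hfd (Polynomial.natDegree_eq_zero_iff_degree_le_zero.mpr (le_of_eq h))
    obtain ⟨t, ht⟩ := IsAlgClosed.exists_root f this
    exact hcon ![1, t] (h1t t) (by rw [← hfe t]; exact ht)
  obtain ⟨c, hc⟩ := Polynomial.natDegree_eq_zero.mp hfd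
  have key : ∀ s : k, s ≠ 0 → g.eval s = c * s ^ D := by
    intro s hs
    have hv : (s • ![1, s⁻¹] : Fin 2 → k) = ![s, 1] := by
      funext i
      fin_cases i <;> simp [mul_inv_cancel₀ hs]
    rw [hge, ← hv, aux_eval_smul hp, ← hfe, ← hc]
    simp [mul_comm]
  have hgz : g - Polynomial.C c * Polynomial.X ^ D = 0 := by
    apply Polynomial.eq_zero_of_infinite_isRoot
    apply Set.Infinite.mono (s := {x : k | x ≠ 0})
    · intro s hs
      simp only [Set.mem_setOf_eq, Polynomial.IsRoot, Polynomial.eval_sub,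
        Polynomial.eval_mul, Polynomial.eval_C, Polynomial.eval_pow, Polynomial.eval_X]
      rw [key s hs]; ring
    · have h := (Set.finite_singleton (0:k)).infinite_compl
      convert h using 1
      ext x; simp
  have hg0 : g.eval 0 = 0 := by
    have := sub_eq_zero.mp hgz
    rw [this]
    simp [zero_pow hD.ne']
  exact hcon ![0, 1] h01 (by rw [← hge 0]; simpa using hg0)

/-- Conjecture 1 (Conjecture `conj1afternotations`) for `r = 2`:
if there is a nonconstant morphism `ψ : ℙ^1_k → V(d) - L(d)`, encoded by an
`N × N` matrix `Ψ` of polynomials in `2` variables over an algebraically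
closed field `k` satisfying conditions (I)-(III), then `N ≥ 4`. -/
theorem carlsson_conj1_of_r_eq_two
    (k : Type*) [Field k] [IsAlgClosed k]
    (n N : ℕ) (hn : 1 ≤ n) (hNn : N = 2 * n)
    (d : Fin N → ℤ) (hd : Antitone d)
    (m : ℕ) (hm : 0 < m)
    (Ψ : Matrix (Fin N) (Fin N) (MvPolynomial (Fin 2) k))
    (hupper : ∀ i j : Fin N, ¬ i < j → Ψ i j = 0)
    (hhom : ∀ i j : Fin N, Ψ i j ≠ 0 →
      (Ψ i j).IsHomogeneous ((m : ℤ) * (d i - d j + 1)).toNat)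
    (hsq : Ψ * Ψ = 0)
    (hrank : ∀ γ : Fin 2 → k, γ ≠ 0 →
      (Ψ.map (MvPolynomial.eval γ)).rank = n) :
    4 ≤ N := by
  by_contra hlt
  push_neg at hlt
  have hN2 : N = 2 := by omega
  subst hN2
  have hn1 : n = 1 := by omega
  subst hn1
  -- find a nontrivial zero of the polynomial `Ψ 0 1`
  obtain ⟨γ, hγ, hγz⟩ : ∃ γ : Fin 2 → k, γ ≠ 0 ∧
      MvPolynomial.eval γ (Ψ 0 1) = 0 := by
    by_cases hp0 : Ψ 0 1 = 0
    · refine ⟨![1, 0], fun h => by simpa using congrFun h 0, by simp [hp0]⟩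
    · have hhom01 := hhom 0 1 hp0
      have hd01 : d 1 ≤ d 0 := hd (by decide : (0 : Fin 2) ≤ 1)
      have hpos : 0 < (m : ℤ) * (d 0 - d 1 + 1) := by
        have hm' : (0 : ℤ) < (m : ℤ) := by exact_mod_cast hm
        nlinarith
      exact aux_exists_zero _ (by omega) hhom01
  -- the evaluated matrix is zero
  have hmap : Ψ.map (MvPolynomial.eval γ) = 0 := by
    ext i j
    fin_cases i <;> fin_cases j <;>
      simp [Matrix.map_apply, hupper 0 0 (by decide), hupper 1 0 (by decide),
        hupper 1 1 (by decide), hγz]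
  have := hrank γ hγ
  rw [hmap, Matrix.rank_zero] at this
  simp at this
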